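/- For discounted state-action distributions: under the assumptions E_{(s,a)∼d₁^{π₁}}[D_TV(p₁(·|s,a), p₂(·|s,a))] ≤ ε_m and E_{s∼d₁^{π₁}}[D_TV(π₁(·|s), π₂(·|s))] ≤ ε_π, one has the recursive inequality ∑_{s,a}|d₁^{π₁}(s,a) − d₂^{π₂}(s,a)| ≤ 2γε_m + 2ε_π + γ ∑_{s,a}|d₁^{π₁}(s,a) − d₂^{π₂}(s,a)|, obtained by splitting via the Bellman flow constraint and the triangle inequality. -/
import Mathlib


open scoped BigOperators

/-- Probability of being in each state at time `t` under initial distribution `μ`,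
dynamics `p`, and policy `π`. -/
noncomputable def stateProb {S A : Type*} [Fintype S] [Fintype A]
    (μ : S → ℝ) (p : S → A → S → ℝ) (π : S → A → ℝ) : ℕ → S → ℝ
  | 0 => μ
  | t + 1 => fun s => ∑ s₀ : S, ∑ a₀ : A, stateProb μ p π t s₀ * π s₀ a₀ * p s₀ a₀ s

/-- Discounted state distribution `d^π(s) = (1-γ) ∑_{t≥0} γ^t P(s_t = s)`. -/
noncomputable def dState {S A : Type*} [Fintype S] [Fintype A]
    (γ : ℝ) (μ : S → ℝ) (p : S → A → S → ℝ) (π : S → A → ℝ) (s : S) : ℝ :=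
  (1 - γ) * ∑' t : ℕ, γ ^ t * stateProb μ p π t s

/-- Discounted state-action distribution `d^π(s,a) = π(a|s) d^π(s)`. -/
noncomputable def dSA {S A : Type*} [Fintype S] [Fintype A]
    (γ : ℝ) (μ : S → ℝ) (p : S → A → S → ℝ) (π : S → A → ℝ) (s : S) (a : A) : ℝ :=
  π s a * dState γ μ p π s

/-- Total variation distance between distributions on a finite set. -/
noncomputable def DTV {X : Type*} [Fintype X] (p q : X → ℝ) : ℝ :=
  (1 / 2) * ∑ x, |p x - q x|

/-- Expected discounted return `J_M(π) = (1/(1-γ)) E_{(s,a)∼d^π}[r(s,a)]`. -/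
noncomputable def J {S A : Type*} [Fintype S] [Fintype A]
    (γ : ℝ) (μ : S → ℝ) (p : S → A → S → ℝ) (π : S → A → ℝ) (r : S → A → ℝ) : ℝ :=
  (1 / (1 - γ)) * ∑ s, ∑ a, dSA γ μ p π s a * r s a

/-- A probability distribution on a finite set. -/
def IsProb {X : Type*} [Fintype X] (p : X → ℝ) : Prop :=
  (∀ x, 0 ≤ p x) ∧ ∑ x, p x = 1

set_option maxHeartbeats 1000000

section Aux

variable {S A : Type*} [Fintype S] [Fintype A]

lemma stateProb_isProb (μ : S → ℝ) (p : S → A → S → ℝ) (π : S → A → ℝ)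
    (hμ : IsProb μ) (hp : ∀ s a, IsProb (p s a)) (hπ : ∀ s, IsProb (π s)) (t : ℕ) :
    IsProb (stateProb μ p π t) := by
  induction t with
  | zero => exact hμ
  | succ t ih =>
    constructor
    · intro s
      simp only [stateProb]
      apply Finset.sum_nonneg; intro s₀ _
      apply Finset.sum_nonneg; intro a₀ _
      exact mul_nonneg (mul_nonneg (ih.1 s₀) ((hπ s₀).1 a₀)) ((hp s₀ a₀).1 s)
    · simp only [stateProb]
      rw [Finset.sum_comm]
      have h : ∀ s₀ : S, ∑ s : S, ∑ a₀ : A, stateProb μ p π t s₀ * π s₀ a₀ * p s₀ a₀ s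
          = stateProb μ p π t s₀ := by
        intro s₀
        rw [Finset.sum_comm]
        calc ∑ a₀ : A, ∑ s : S, stateProb μ p π t s₀ * π s₀ a₀ * p s₀ a₀ s
            = ∑ a₀ : A, stateProb μ p π t s₀ * π s₀ a₀ := by
              refine Finset.sum_congr rfl fun a₀ _ => ?_
              rw [← Finset.mul_sum, (hp s₀ a₀).2, mul_one]
          _ = stateProb μ p π t s₀ := by rw [← Finset.mul_sum, (hπ s₀).2, mul_one]
      simp_rw [h]
      exact ih.2

lemma summable_geom_state (γ : ℝ) (hγ0 : 0 ≤ γ) (hγ1 : γ < 1)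
    (μ : S → ℝ) (p : S → A → S → ℝ) (π : S → A → ℝ)
    (hμ : IsProb μ) (hp : ∀ s a, IsProb (p s a)) (hπ : ∀ s, IsProb (π s)) (s : S) :
    Summable (fun t : ℕ => γ ^ t * stateProb μ p π t s) := by
  refine Summable.of_nonneg_of_le (fun t => ?_) (fun t => ?_)
    (summable_geometric_of_lt_one hγ0 hγ1)
  · exact mul_nonneg (pow_nonneg hγ0 t) ((stateProb_isProb μ p π hμ hp hπ t).1 s)
  · have hle : stateProb μ p π t s ≤ 1 := by
      have := Finset.single_le_sum
        (fun x _ => (stateProb_isProb μ p π hμ hp hπ t).1 x) (Finset.mem_univ s)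
      rwa [(stateProb_isProb μ p π hμ hp hπ t).2] at this
    calc γ ^ t * stateProb μ p π t s ≤ γ ^ t * 1 :=
          mul_le_mul_of_nonneg_left hle (pow_nonneg hγ0 t)
      _ = γ ^ t := mul_one _

lemma dState_nonneg (γ : ℝ) (hγ0 : 0 ≤ γ) (hγ1 : γ < 1)
    (μ : S → ℝ) (p : S → A → S → ℝ) (π : S → A → ℝ)
    (hμ : IsProb μ) (hp : ∀ s a, IsProb (p s a)) (hπ : ∀ s, IsProb (π s)) (s : S) :
    0 ≤ dState γ μ p π s := by
  apply mul_nonneg (by linarith)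
  exact tsum_nonneg fun t =>
    mul_nonneg (pow_nonneg hγ0 t) ((stateProb_isProb μ p π hμ hp hπ t).1 s)

lemma dState_bellman (γ : ℝ) (hγ0 : 0 ≤ γ) (hγ1 : γ < 1)
    (μ : S → ℝ) (p : S → A → S → ℝ) (π : S → A → ℝ)
    (hμ : IsProb μ) (hp : ∀ s a, IsProb (p s a)) (hπ : ∀ s, IsProb (π s)) (s : S) :
    dState γ μ p π s = (1 - γ) * μ s +
      γ * ∑ s₀ : S, ∑ a₀ : A, dSA γ μ p π s₀ a₀ * p s₀ a₀ s := by
  have hsum : ∀ s' : S, Summable (fun t : ℕ => γ ^ t * stateProb μ p π t s') :=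
    fun s' => summable_geom_state γ hγ0 hγ1 μ p π hμ hp hπ s'
  have h1 : (∑' t : ℕ, γ ^ t * stateProb μ p π t s)
      = μ s + γ * ∑ x : S × A,
          ((∑' t : ℕ, γ ^ t * stateProb μ p π t x.1) * (π x.1 x.2 * p x.1 x.2 s)) := by
    rw [Summable.tsum_eq_zero_add (hsum s)]
    have h0 : γ ^ 0 * stateProb μ p π 0 s = μ s := by simp [stateProb]
    have hstep : ∀ t : ℕ, γ ^ (t + 1) * stateProb μ p π (t + 1) s
        = ∑ x : S × A, γ * ((γ ^ t * stateProb μ p π t x.1) * (π x.1 x.2 * p x.1 x.2 s)) := by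
      intro t
      rw [Fintype.sum_prod_type]
      simp only [stateProb, Finset.mul_sum]
      refine Finset.sum_congr rfl fun s₀ _ => Finset.sum_congr rfl fun a₀ _ => ?_
      ring
    simp_rw [h0, hstep]
    rw [Summable.tsum_finsetSum (fun x _ => (((hsum x.1).mul_right _).mul_left γ))]
    congr 1
    rw [Finset.mul_sum]
    refine Finset.sum_congr rfl fun x _ => ?_
    rw [tsum_mul_left, tsum_mul_right]
  unfold dState dSA dState
  rw [h1, mul_add]
  congr 1
  rw [Fintype.sum_prod_type]
  simp only [Finset.mul_sum]
  refine Finset.sum_congr rfl fun s₀ _ => ?_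
  refine Finset.sum_congr rfl fun a₀ _ => ?_
  ring

end Aux


/-- Recursive inequality for the difference of discounted state-action distributions,
obtained via the Bellman flow constraint and the triangle inequality. -/
theorem discounted_distribution_recursive_inequality {S A : Type*} [Fintype S] [Fintype A]
    (γ : ℝ) (hγ0 : 0 ≤ γ) (hγ1 : γ < 1)
    (μ : S → ℝ) (hμ : IsProb μ)
    (p₁ p₂ : S → A → S → ℝ) (hp₁ : ∀ s a, IsProb (p₁ s a)) (hp₂ : ∀ s a, IsProb (p₂ s a))
    (π₁ π₂ : S → A → ℝ) (hπ₁ : ∀ s, IsProb (π₁ s)) (hπ₂ : ∀ s, IsProb (π₂ s))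
    (εm επ : ℝ)
    (hm : ∑ s : S, ∑ a : A, dSA γ μ p₁ π₁ s a * DTV (p₁ s a) (p₂ s a) ≤ εm)
    (hπ : ∑ s : S, dState γ μ p₁ π₁ s * DTV (π₁ s) (π₂ s) ≤ επ) :
    ∑ s : S, ∑ a : A, |dSA γ μ p₁ π₁ s a - dSA γ μ p₂ π₂ s a| ≤
      2 * γ * εm + 2 * επ +
        γ * ∑ s : S, ∑ a : A, |dSA γ μ p₁ π₁ s a - dSA γ μ p₂ π₂ s a| := by
  set D1 : S → ℝ := dState γ μ p₁ π₁ with hD1def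
  set D2 : S → ℝ := dState γ μ p₂ π₂ with hD2def
  set d1 : S → A → ℝ := dSA γ μ p₁ π₁ with hd1def
  set d2 : S → A → ℝ := dSA γ μ p₂ π₂ with hd2def
  have hD1nn : ∀ s, 0 ≤ D1 s := dState_nonneg γ hγ0 hγ1 μ p₁ π₁ hμ hp₁ hπ₁
  have hd1nn : ∀ s a, 0 ≤ d1 s a := fun s a =>
    mul_nonneg ((hπ₁ s).1 a) (hD1nn s)
  -- Step 1: split off the policy difference
  have step1 : ∀ s : S, ∑ a : A, |d1 s a - d2 s a|
      ≤ 2 * (D1 s * DTV (π₁ s) (π₂ s)) + |D1 s - D2 s| := by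
    intro s
    have : ∀ a : A, |d1 s a - d2 s a|
        ≤ |π₁ s a - π₂ s a| * D1 s + π₂ s a * |D1 s - D2 s| := by
      intro a
      calc |d1 s a - d2 s a|
          = |(π₁ s a - π₂ s a) * D1 s + π₂ s a * (D1 s - D2 s)| := by
            simp only [hd1def, hd2def, dSA, ← hD1def, ← hD2def]; congr 1; ring
        _ ≤ |(π₁ s a - π₂ s a) * D1 s| + |π₂ s a * (D1 s - D2 s)| := abs_add_le _ _
        _ = |π₁ s a - π₂ s a| * D1 s + π₂ s a * |D1 s - D2 s| := by
            rw [abs_mul, abs_mul, abs_of_nonneg (hD1nn s), abs_of_nonneg ((hπ₂ s).1 a)]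
    calc ∑ a : A, |d1 s a - d2 s a|
        ≤ ∑ a : A, (|π₁ s a - π₂ s a| * D1 s + π₂ s a * |D1 s - D2 s|) :=
          Finset.sum_le_sum fun a _ => this a
      _ = (∑ a : A, |π₁ s a - π₂ s a|) * D1 s + (∑ a : A, π₂ s a) * |D1 s - D2 s| := by
          rw [Finset.sum_add_distrib, ← Finset.sum_mul, ← Finset.sum_mul]
      _ = 2 * (D1 s * DTV (π₁ s) (π₂ s)) + |D1 s - D2 s| := by
          rw [(hπ₂ s).2, one_mul]; unfold DTV; ring
  have key1 : ∑ s : S, ∑ a : A, |d1 s a - d2 s a|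
      ≤ 2 * επ + ∑ s : S, |D1 s - D2 s| := by
    calc ∑ s : S, ∑ a : A, |d1 s a - d2 s a|
        ≤ ∑ s : S, (2 * (D1 s * DTV (π₁ s) (π₂ s)) + |D1 s - D2 s|) :=
          Finset.sum_le_sum fun s _ => step1 s
      _ = 2 * (∑ s : S, D1 s * DTV (π₁ s) (π₂ s)) + ∑ s : S, |D1 s - D2 s| := by
          rw [Finset.sum_add_distrib, Finset.mul_sum]
      _ ≤ 2 * επ + ∑ s : S, |D1 s - D2 s| := by
          have h2 : (2:ℝ) * (∑ s : S, D1 s * DTV (π₁ s) (π₂ s)) ≤ 2 * επ :=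
            mul_le_mul_of_nonneg_left hπ (by norm_num)
          linarith
  -- Step 2: bound the state-distribution difference via the Bellman flow
  have hbel : ∀ s : S, D1 s - D2 s
      = γ * ∑ s₀ : S, ∑ a₀ : A, (d1 s₀ a₀ * p₁ s₀ a₀ s - d2 s₀ a₀ * p₂ s₀ a₀ s) := by
    intro s
    have e1 := dState_bellman γ hγ0 hγ1 μ p₁ π₁ hμ hp₁ hπ₁ s
    have e2 := dState_bellman γ hγ0 hγ1 μ p₂ π₂ hμ hp₂ hπ₂ s
    have hsplit : ∑ s₀ : S, ∑ a₀ : A, (d1 s₀ a₀ * p₁ s₀ a₀ s - d2 s₀ a₀ * p₂ s₀ a₀ s)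
        = (∑ s₀ : S, ∑ a₀ : A, d1 s₀ a₀ * p₁ s₀ a₀ s)
          - ∑ s₀ : S, ∑ a₀ : A, d2 s₀ a₀ * p₂ s₀ a₀ s := by
      simp [Finset.sum_sub_distrib]
    rw [hsplit, hD1def, hD2def, e1, e2, ← hd1def, ← hd2def]
    ring
  have step2 : ∀ s : S, |D1 s - D2 s|
      ≤ γ * ∑ s₀ : S, ∑ a₀ : A,
          (d1 s₀ a₀ * |p₁ s₀ a₀ s - p₂ s₀ a₀ s| + |d1 s₀ a₀ - d2 s₀ a₀| * p₂ s₀ a₀ s) := by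
    intro s
    rw [hbel s, abs_mul, abs_of_nonneg hγ0]
    refine mul_le_mul_of_nonneg_left ?_ hγ0
    refine le_trans (Finset.abs_sum_le_sum_abs _ _) (Finset.sum_le_sum fun s₀ _ => ?_)
    refine le_trans (Finset.abs_sum_le_sum_abs _ _) (Finset.sum_le_sum fun a₀ _ => ?_)
    calc |d1 s₀ a₀ * p₁ s₀ a₀ s - d2 s₀ a₀ * p₂ s₀ a₀ s|
        = |d1 s₀ a₀ * (p₁ s₀ a₀ s - p₂ s₀ a₀ s) + (d1 s₀ a₀ - d2 s₀ a₀) * p₂ s₀ a₀ s| := by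
          congr 1; ring
      _ ≤ |d1 s₀ a₀ * (p₁ s₀ a₀ s - p₂ s₀ a₀ s)| + |(d1 s₀ a₀ - d2 s₀ a₀) * p₂ s₀ a₀ s| :=
          abs_add_le _ _
      _ = d1 s₀ a₀ * |p₁ s₀ a₀ s - p₂ s₀ a₀ s| + |d1 s₀ a₀ - d2 s₀ a₀| * p₂ s₀ a₀ s := by
          rw [abs_mul, abs_mul, abs_of_nonneg (hd1nn s₀ a₀), abs_of_nonneg ((hp₂ s₀ a₀).1 s)]
  have key2 : ∑ s : S, |D1 s - D2 s|
      ≤ 2 * γ * εm + γ * ∑ s : S, ∑ a : A, |d1 s a - d2 s a| := by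
    have swap : ∑ s : S, ∑ s₀ : S, ∑ a₀ : A,
          (d1 s₀ a₀ * |p₁ s₀ a₀ s - p₂ s₀ a₀ s| + |d1 s₀ a₀ - d2 s₀ a₀| * p₂ s₀ a₀ s)
        = ∑ s₀ : S, ∑ a₀ : A, ∑ s : S,
          (d1 s₀ a₀ * |p₁ s₀ a₀ s - p₂ s₀ a₀ s| + |d1 s₀ a₀ - d2 s₀ a₀| * p₂ s₀ a₀ s) := by
      rw [Finset.sum_comm]
      exact Finset.sum_congr rfl fun s₀ _ => Finset.sum_comm
    have inner : ∀ (s₀ : S) (a₀ : A), ∑ s : S,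
          (d1 s₀ a₀ * |p₁ s₀ a₀ s - p₂ s₀ a₀ s| + |d1 s₀ a₀ - d2 s₀ a₀| * p₂ s₀ a₀ s)
        = 2 * (d1 s₀ a₀ * DTV (p₁ s₀ a₀) (p₂ s₀ a₀)) + |d1 s₀ a₀ - d2 s₀ a₀| := by
      intro s₀ a₀
      rw [Finset.sum_add_distrib, ← Finset.mul_sum, ← Finset.mul_sum, (hp₂ s₀ a₀).2, mul_one]
      unfold DTV; ring
    calc ∑ s : S, |D1 s - D2 s|
        ≤ ∑ s : S, γ * ∑ s₀ : S, ∑ a₀ : A,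
            (d1 s₀ a₀ * |p₁ s₀ a₀ s - p₂ s₀ a₀ s| + |d1 s₀ a₀ - d2 s₀ a₀| * p₂ s₀ a₀ s) :=
          Finset.sum_le_sum fun s _ => step2 s
      _ = γ * ∑ s₀ : S, ∑ a₀ : A,
            (2 * (d1 s₀ a₀ * DTV (p₁ s₀ a₀) (p₂ s₀ a₀)) + |d1 s₀ a₀ - d2 s₀ a₀|) := by
          rw [← Finset.mul_sum, swap]
          congr 1
          exact Finset.sum_congr rfl fun s₀ _ => Finset.sum_congr rfl fun a₀ _ => inner s₀ a₀
      _ = γ * (2 * (∑ s₀ : S, ∑ a₀ : A, d1 s₀ a₀ * DTV (p₁ s₀ a₀) (p₂ s₀ a₀))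
            + ∑ s₀ : S, ∑ a₀ : A, |d1 s₀ a₀ - d2 s₀ a₀|) := by
          congr 1
          simp only [Finset.sum_add_distrib, Finset.mul_sum]
      _ ≤ γ * (2 * εm + ∑ s₀ : S, ∑ a₀ : A, |d1 s₀ a₀ - d2 s₀ a₀|) := by
          refine mul_le_mul_of_nonneg_left ?_ hγ0
          have := mul_le_mul_of_nonneg_left hm (by norm_num : (0:ℝ) ≤ 2)
          linarith
      _ = 2 * γ * εm + γ * ∑ s : S, ∑ a : A, |d1 s a - d2 s a| := by ring
  linarith [key1, key2]
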